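/- Let n ≥ 1 and a ≥ 2 be natural numbers. Then for every g ∈ MvPolynomial (Fin n) ℝ that is homogeneous of degree a − 2 there exists p ∈ MvPolynomial (Fin n) ℝ homogeneous of degree a with Δp = g; that is, the polynomial Laplacian maps the space of homogeneous polynomials of degree a onto the space of homogeneous polynomials of degree a − 2. -/

import Mathlib

open MvPolynomial

namespace LapAux

variable {n : ℕ}

/-- The Laplacian. -/
noncomputable def lap (p : MvPolynomial (Fin n) ℝ) : MvPolynomial (Fin n) ℝ :=
  ∑ i, pderiv i (pderiv i p)

/-- `r² = ∑ xᵢ²`. -/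
noncomputable def r2 (n : ℕ) : MvPolynomial (Fin n) ℝ := ∑ i, X i ^ 2

lemma r2_isHomogeneous : (r2 n).IsHomogeneous 2 :=
  IsHomogeneous.sum _ _ _ fun i _ => isHomogeneous_X_pow i 2

lemma degree_eq_sum_univ (s : Fin n →₀ ℕ) : s.degree = ∑ j, s j :=
  Finset.sum_subset (Finset.subset_univ _) fun x _ hx => by
    simpa using Finsupp.notMem_support_iff.mp hx

lemma sub_single_add {s : Fin n →₀ ℕ} {i : Fin n} (h : s i ≠ 0) :
    (s - Finsupp.single i 1) + Finsupp.single i 1 = s := by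
  ext j
  rw [Finsupp.add_apply, Finsupp.tsub_apply, Finsupp.single_apply]
  by_cases hj : i = j
  · rw [if_pos hj]; subst hj; omega
  · simp [hj]

lemma degree_sub_single {s : Fin n →₀ ℕ} {i : Fin n} {d : ℕ} (h : s i ≠ 0)
    (hd : s.degree = d + 1) : (s - Finsupp.single i 1).degree = d := by
  rw [degree_eq_sum_univ] at hd ⊢
  rw [← Finset.sum_erase_add _ _ (Finset.mem_univ i)] at hd ⊢
  have h1 : ∀ j ∈ Finset.univ.erase i, (s - Finsupp.single i 1 : Fin n →₀ ℕ) j = s j := by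
    intro j hj
    have h2 : i ≠ j := fun e => (Finset.mem_erase.mp hj).1 e.symm
    rw [Finsupp.tsub_apply, Finsupp.single_apply, if_neg h2, Nat.sub_zero]
  rw [Finset.sum_congr rfl h1]
  have h2 : (s - Finsupp.single i 1 : Fin n →₀ ℕ) i = s i - 1 := by
    rw [Finsupp.tsub_apply, Finsupp.single_apply, if_pos rfl]
  rw [h2]
  set A := ∑ x ∈ Finset.univ.erase i, s x with hA
  omega

lemma degree_of_coeff {p : MvPolynomial (Fin n) ℝ} {d : ℕ} (hp : p.IsHomogeneous d)
    {s : Fin n →₀ ℕ} (h : coeff s p ≠ 0) : s.degree = d := by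
  have := hp h
  rw [Finsupp.degree_eq_weight_one]; exact this

lemma isHomogeneous_pderiv {p : MvPolynomial (Fin n) ℝ} {d : ℕ}
    (hp : p.IsHomogeneous (d + 1)) (i : Fin n) : (pderiv i p).IsHomogeneous d := by
  rw [← support_sum_monomial_coeff p, map_sum]
  apply IsHomogeneous.sum
  intro s hs
  rw [pderiv_monomial]
  by_cases h : s i = 0
  · rw [h]
    simp only [Nat.cast_zero, mul_zero, map_zero]
    exact isHomogeneous_zero _ _ _
  · exact isHomogeneous_monomial _
      (degree_sub_single h (degree_of_coeff hp (MvPolynomial.mem_support_iff.mp hs)))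

lemma pderiv_eq_zero_of_isHomogeneous_zero {p : MvPolynomial (Fin n) ℝ}
    (hp : p.IsHomogeneous 0) (i : Fin n) : pderiv i p = 0 := by
  rw [← support_sum_monomial_coeff p, map_sum]
  apply Finset.sum_eq_zero
  intro s hs
  have h0 : s = 0 := (Finsupp.degree_eq_zero_iff s).mp
    (degree_of_coeff hp (MvPolynomial.mem_support_iff.mp hs))
  subst h0
  rw [pderiv_monomial]
  simp

lemma euler {p : MvPolynomial (Fin n) ℝ} {d : ℕ} (hp : p.IsHomogeneous d) :
    ∑ i, (X i : MvPolynomial (Fin n) ℝ) * pderiv i p = (d : ℝ) • p := by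
  have step : ∀ s ∈ p.support, ∀ i : Fin n,
      (X i : MvPolynomial (Fin n) ℝ) * pderiv i (monomial s (coeff s p))
        = ((s i : ℝ)) • monomial s (coeff s p) := by
    intro s hs i
    rw [pderiv_monomial]
    by_cases h : s i = 0
    · rw [h]; simp
    · rw [← pow_one (X i : MvPolynomial (Fin n) ℝ), X_pow_eq_monomial, monomial_mul,
        smul_monomial, add_comm, sub_single_add h, one_mul, smul_eq_mul, mul_comm]
  calc ∑ i, (X i : MvPolynomial (Fin n) ℝ) * pderiv i p
      = ∑ i, ∑ s ∈ p.support, (X i : MvPolynomial (Fin n) ℝ)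
          * pderiv i (monomial s (coeff s p)) := by
        congr 1; ext i
        conv_lhs => rw [← support_sum_monomial_coeff p]
        rw [map_sum, Finset.mul_sum]
    _ = ∑ s ∈ p.support, ∑ i, (X i : MvPolynomial (Fin n) ℝ)
          * pderiv i (monomial s (coeff s p)) := Finset.sum_comm
    _ = ∑ s ∈ p.support, (d : ℝ) • monomial s (coeff s p) := by
        apply Finset.sum_congr rfl
        intro s hs
        rw [Finset.sum_congr rfl (fun i _ => step s hs i), ← Finset.sum_smul]
        congr 1
        have : s.degree = d := degree_of_coeff hp (MvPolynomial.mem_support_iff.mp hs)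
        rw [← this, degree_eq_sum_univ]
        push_cast
        rfl
    _ = (d : ℝ) • p := by rw [← Finset.smul_sum, support_sum_monomial_coeff]

lemma lap_smul (c : ℝ) (p : MvPolynomial (Fin n) ℝ) : lap (c • p) = c • lap p := by
  simp [lap, Finset.smul_sum]

lemma lap_sub (p q : MvPolynomial (Fin n) ℝ) : lap (p - q) = lap p - lap q := by
  simp [lap, Finset.sum_sub_distrib]

lemma lap_isHomogeneous {p : MvPolynomial (Fin n) ℝ} {d : ℕ}
    (hp : p.IsHomogeneous (d + 2)) : (lap p).IsHomogeneous d :=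
  IsHomogeneous.sum _ _ _ fun i _ =>
    isHomogeneous_pderiv (isHomogeneous_pderiv hp i) i

lemma lap_eq_zero_of_le_one {p : MvPolynomial (Fin n) ℝ} {d : ℕ}
    (hp : p.IsHomogeneous d) (hd : d ≤ 1) : lap p = 0 := by
  apply Finset.sum_eq_zero
  intro i _
  interval_cases d
  · rw [pderiv_eq_zero_of_isHomogeneous_zero hp i, map_zero]
  · exact pderiv_eq_zero_of_isHomogeneous_zero (isHomogeneous_pderiv hp i) i

lemma pderiv_r2 (i : Fin n) : pderiv i (r2 n) = C 2 * X i := by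
  rw [r2, map_sum, Finset.sum_eq_single i
    (fun j _ hji => by simp [pderiv_pow, pderiv_X_of_ne hji]) (by simp)]
  rw [pderiv_pow, pderiv_X_self]
  simp only [map_ofNat, Nat.cast_ofNat, nsmul_eq_mul, pow_one, mul_one]
  norm_num

lemma lap_r2_mul {h : MvPolynomial (Fin n) ℝ} {d : ℕ} (hh : h.IsHomogeneous d) :
    lap (r2 n * h) = ((2 * n + 4 * d : ℕ) : ℝ) • h + r2 n * lap h := by
  have point : ∀ i : Fin n, pderiv i (pderiv i (r2 n * h)) =
      C 2 * h + C 2 * (X i * pderiv i h) + C 2 * (X i * pderiv i h)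
        + r2 n * pderiv i (pderiv i h) := by
    intro i
    rw [pderiv_mul, pderiv_r2, map_add, pderiv_mul, pderiv_mul, pderiv_mul,
      pderiv_r2, pderiv_C, pderiv_X_self]
    ring
  rw [lap, Finset.sum_congr rfl fun i _ => point i]
  rw [Finset.sum_add_distrib, Finset.sum_add_distrib, Finset.sum_add_distrib,
    Finset.sum_const, ← Finset.mul_sum, ← Finset.mul_sum, euler hh,
    Finset.card_univ, Fintype.card_fin,
    show (∑ i, pderiv i (pderiv i h)) = lap h from rfl,
    smul_eq_C_mul, smul_eq_C_mul, nsmul_eq_mul]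
  push_cast
  simp only [map_add, map_mul, map_natCast, map_ofNat]
  ring

lemma key (hn : 1 ≤ n) : ∀ b : ℕ, ∀ c : ℝ, 0 < c →
    ∀ g : MvPolynomial (Fin n) ℝ, g.IsHomogeneous b →
    ∃ h : MvPolynomial (Fin n) ℝ, h.IsHomogeneous b ∧ c • h + r2 n * lap h = g := by
  intro b
  induction b using Nat.strong_induction_on with
  | _ b ih =>
    intro c hc g hg
    rcases le_or_gt b 1 with hb | hb
    · refine ⟨c⁻¹ • g, ?_, ?_⟩
      · exact (homogeneousSubmodule (Fin n) ℝ b).smul_mem _ hg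
      · rw [lap_smul, lap_eq_zero_of_le_one hg hb, smul_zero, mul_zero, add_zero,
          smul_smul, mul_inv_cancel₀ hc.ne', one_smul]
    · obtain ⟨k, rfl⟩ : ∃ k, b = k + 2 := ⟨b - 2, by omega⟩
      set M : ℝ := ((2 * n + 4 * k : ℕ) : ℝ) with hM
      have hM0 : 0 < M := by
        rw [hM]
        have : 0 < 2 * n + 4 * k := by omega
        exact_mod_cast this
      obtain ⟨u, hu, hequ⟩ := ih k (by omega) (c + M) (by positivity) (lap g)
        (lap_isHomogeneous hg)
      refine ⟨c⁻¹ • (g - r2 n * u), ?_, ?_⟩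
      · apply (homogeneousSubmodule (Fin n) ℝ (k + 2)).smul_mem
        apply (homogeneousSubmodule (Fin n) ℝ (k + 2)).sub_mem hg
        rw [mem_homogeneousSubmodule]
        have := r2_isHomogeneous.mul hu
        rwa [add_comm] at this
      · have hlaph : lap (c⁻¹ • (g - r2 n * u)) = c⁻¹ • (c • u) := by
          rw [lap_smul, lap_sub, lap_r2_mul hu, ← hequ, ← hM]
          congr 1
          rw [add_smul]
          abel
        rw [hlaph, smul_smul, smul_smul, mul_inv_cancel₀ hc.ne',
          inv_mul_cancel₀ hc.ne', one_smul, one_smul, sub_add_cancel]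

end LapAux

/-- The polynomial Laplacian `Δp = ∑ i, pderiv i (pderiv i p)` maps the space of homogeneous
polynomials of degree `a ≥ 2` onto the space of homogeneous polynomials of degree `a - 2`. -/
theorem laplacian_surjective_on_homogeneous (n a : ℕ) (hn : 1 ≤ n) (ha : 2 ≤ a)
    (g : MvPolynomial (Fin n) ℝ) (hg : g ∈ homogeneousSubmodule (Fin n) ℝ (a - 2)) :
    ∃ p ∈ homogeneousSubmodule (Fin n) ℝ a,
      (∑ i, pderiv i (pderiv i p)) = g := by
  obtain ⟨k, rfl⟩ : ∃ k, a = k + 2 := ⟨a - 2, by omega⟩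
  have hgk : g.IsHomogeneous k := by simpa using hg
  have hM0 : (0 : ℝ) < ((2 * n + 4 * k : ℕ) : ℝ) := by
    have : 0 < 2 * n + 4 * k := by omega
    exact_mod_cast this
  obtain ⟨h, hh, heq⟩ := LapAux.key hn k _ hM0 g hgk
  refine ⟨LapAux.r2 n * h, ?_, ?_⟩
  · rw [mem_homogeneousSubmodule]
    have := LapAux.r2_isHomogeneous.mul hh
    rwa [add_comm] at this
  · have h2 : LapAux.lap (LapAux.r2 n * h) = g := by
      rw [LapAux.lap_r2_mul hh]; exact heq
    exact h2
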